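/- Let Ω be partitioned into blocks Ω₁, …, Ω_ℓ each of size k ≥ 5 with k ≠ 6, and let K ≤ ∏ᵢ Alt(Ω_i) be a subdirect product. Fix a bijection structure L ≤ ∏ᵢ Alt(Δ_i) similarly, and a permutation π ∈ S_ℓ. Then the number of bijections φ : Ω → Δ mapping Ω_i to Δ_{π(i)} with φ⁻¹ K φ = L is at most 2^ℓ · |K|. -/

import Mathlib

/-- The natural embedding of `∏ᵢ Sym(Ω_i)` into `Sym(⋃ᵢ Ω_i)`, where `Ω_i = {i} × Fin k`. -/
def blockEmbed (ℓ k : ℕ) : (Fin ℓ → Equiv.Perm (Fin k)) →* Equiv.Perm (Fin ℓ × Fin k) where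
  toFun g := Equiv.prodCongrRight g
  map_one' := Equiv.ext fun p => rfl
  map_mul' _ _ := Equiv.ext fun p => rfl

section Aux

open Equiv Equiv.Perm

open Equiv Equiv.Perm

lemma exists_small_support {k : ℕ} (hk : 5 ≤ k)
    (Q : Subgroup (alternatingGroup (Fin k))) (hQ : Q.Normal) (hQbot : Q ≠ ⊥) :
    ∃ δ : alternatingGroup (Fin k), δ ∈ Q ∧ δ ≠ 1 ∧
      ∃ s : Finset (Fin k), s.card ≤ 5 ∧ ∀ x ∉ s, (δ : Perm (Fin k)) x = x := by
  classical
  obtain ⟨σ', hσ'Q, hσ'1⟩ : ∃ x ∈ Q, x ≠ 1 := by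
    by_contra h
    push_neg at h
    exact hQbot ((Subgroup.eq_bot_iff_forall Q).2 h)
  set σ : Perm (Fin k) := (σ' : Perm (Fin k)) with hσdef
  have hσ1 : σ ≠ 1 := fun h => hσ'1 (Subtype.ext h)
  obtain ⟨a, ha⟩ : ∃ a, σ a ≠ a := by
    by_contra h
    push_neg at h
    exact hσ1 (Equiv.ext h)
  set b : Fin k := σ a with hb
  have hba : b ≠ a := ha
  obtain ⟨c, hc⟩ : ∃ c, c ∉ ({a, b, σ⁻¹ a} : Finset (Fin k)) := by
    have h1 : ({a, b, σ⁻¹ a} : Finset (Fin k)).card ≤ 3 :=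
      (Finset.card_insert_le _ _).trans
        (by simpa using Nat.add_le_add_right (Finset.card_insert_le b ({σ⁻¹ a} : Finset (Fin k))) 1)
    have h2 : 0 < ({a, b, σ⁻¹ a}ᶜ : Finset (Fin k)).card := by
      rw [Finset.card_compl, Fintype.card_fin]; omega
    obtain ⟨c, hc⟩ := Finset.card_pos.mp h2
    exact ⟨c, Finset.mem_compl.mp hc⟩
  simp only [Finset.mem_insert, Finset.mem_singleton, not_or] at hc
  obtain ⟨hca, hcb, hcs⟩ := hc
  set τ : Perm (Fin k) := Equiv.swap a c * Equiv.swap a b with hτdef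
  have hτ3 : IsThreeCycle τ :=
    isThreeCycle_swap_mul_swap_same (Ne.symm hca) (Ne.symm hba) hcb
  have hτa : τ a = b := by
    rw [hτdef, Equiv.Perm.mul_apply, Equiv.swap_apply_left,
      Equiv.swap_apply_of_ne_of_ne hba (fun h => hcb h.symm)]
  have hτb : τ b = c := by
    rw [hτdef, Equiv.Perm.mul_apply, Equiv.swap_apply_right, Equiv.swap_apply_left]
  have hτc : τ c = a := by
    rw [hτdef, Equiv.Perm.mul_apply, Equiv.swap_apply_of_ne_of_ne hca hcb,
      Equiv.swap_apply_right]
  have hτfix : ∀ x, x ≠ a → x ≠ b → x ≠ c → τ x = x := by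
    intro x hxa hxb hxc
    simp [hτdef, Equiv.swap_apply_of_ne_of_ne hxa hxb, Equiv.swap_apply_of_ne_of_ne hxa hxc]
  set τ' : alternatingGroup (Fin k) := ⟨τ, hτ3.mem_alternatingGroup⟩ with hτ'
  set δ' : alternatingGroup (Fin k) := τ' * σ' * τ'⁻¹ * σ'⁻¹ with hδ'
  have hδ'Q : δ' ∈ Q := by
    exact mul_mem (hQ.conj_mem σ' hσ'Q τ') (inv_mem hσ'Q)
  have hδcoe : (δ' : Perm (Fin k)) = τ * σ * τ⁻¹ * σ⁻¹ := rfl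
  have hδb : (δ' : Perm (Fin k)) b = τ (σ c) := by
    have h1 : σ⁻¹ b = a := by rw [hb, show σ⁻¹ (σ a) = a from σ.symm_apply_apply a]
    have h2 : τ⁻¹ a = c := by rw [← hτc]; simp
    simp [hδcoe, Equiv.Perm.mul_apply, h1, h2]
  refine ⟨δ', hδ'Q, ?_, {a, b, c, σ b, σ c}, ?_, ?_⟩
  · intro h
    have hb1 : (δ' : Perm (Fin k)) b = b := by rw [h]; rfl
    rw [hδb] at hb1
    have hσca : σ c = a := τ.injective (hb1.trans hτa.symm)
    exact hcs (by rw [← hσca, show σ⁻¹ (σ c) = c from σ.symm_apply_apply c])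
  · refine (Finset.card_insert_le _ _).trans ?_
    refine Nat.add_le_add_right ((Finset.card_insert_le _ _).trans ?_) 1
    refine Nat.add_le_add_right ((Finset.card_insert_le _ _).trans ?_) 1
    exact Nat.add_le_add_right (Finset.card_insert_le _ _) 1
  · intro x hx
    simp only [Finset.mem_insert, Finset.mem_singleton, not_or] at hx
    obtain ⟨hxa, hxb, hxc, hxsb, hxsc⟩ := hx
    have hy : σ⁻¹ x ≠ a ∧ σ⁻¹ x ≠ b ∧ σ⁻¹ x ≠ c := by
      refine ⟨fun h => hxb ?_, fun h => hxsb ?_, fun h => hxsc ?_⟩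
      · rw [hb, ← h, show σ (σ⁻¹ x) = x from σ.apply_symm_apply x]
      · rw [← h, show σ (σ⁻¹ x) = x from σ.apply_symm_apply x]
      · rw [← h, show σ (σ⁻¹ x) = x from σ.apply_symm_apply x]
    have hτinv : τ⁻¹ (σ⁻¹ x) = σ⁻¹ x := by
      rw [Equiv.Perm.inv_eq_iff_eq]
      exact (hτfix _ hy.1 hy.2.1 hy.2.2).symm
    rw [hδcoe, Equiv.Perm.mul_apply, Equiv.Perm.mul_apply, Equiv.Perm.mul_apply, hτinv,
      show σ (σ⁻¹ x) = x from σ.apply_symm_apply x, hτfix x hxa hxb hxc]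

theorem alt_normal_bot_or_top {k : ℕ} (hk : 5 ≤ k)
    (Q : Subgroup (alternatingGroup (Fin k))) (hQ : Q.Normal) : Q = ⊥ ∨ Q = ⊤ := by
  classical
  by_cases hQbot : Q = ⊥
  · exact Or.inl hQbot
  right
  obtain ⟨δ, hδQ, hδ1, s, hscard, hsfix⟩ := exists_small_support hk Q hQ hQbot
  obtain ⟨sS, hsS, -, hScard⟩ :=
    Finset.exists_subsuperset_card_eq (Finset.subset_univ s) hscard
      (by simpa using hk)
  have hcardS : Fintype.card {x : Fin k // x ∈ sS} = 5 := by
    simpa using hScard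
  set f : Fin 5 ≃ {x : Fin k // x ∈ sS} := (Fintype.equivFinOfCardEq hcardS).symm with hf
  set F : Perm (Fin 5) →* Perm (Fin k) := Equiv.Perm.extendDomainHom f with hF
  have hFapp : ∀ g, F g = g.extendDomain f := fun g => rfl
  have hFsign : ∀ g, Equiv.Perm.sign (F g) = Equiv.Perm.sign g := fun g => by
    rw [hFapp]; exact Equiv.Perm.sign_extendDomain g f
  set F' : alternatingGroup (Fin 5) →* alternatingGroup (Fin k) :=
    (F.comp (alternatingGroup (Fin 5)).subtype).codRestrict _ (fun x => by
      have := x.2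
      rw [Equiv.Perm.mem_alternatingGroup] at this ⊢
      simp only [MonoidHom.comp_apply, Subgroup.coe_subtype]
      rw [hFsign]; exact this) with hF'
  have hF'coe : ∀ x, (F' x : Perm (Fin k)) = F (x : Perm (Fin 5)) := fun x => rfl
  -- pull back δ
  set δp : Perm (Fin k) := (δ : Perm (Fin k)) with hδp
  have hmem : ∀ x, x ∈ sS ↔ δp x ∈ sS := by
    intro x
    constructor
    · intro hx
      by_cases hfix : δp x = x
      · rwa [hfix]
      · by_contra hnot
        have h1 : δp x ∉ s := fun h => hnot (hsS h)
        have := hsfix _ h1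
        exact hfix (δp.injective this)
    · intro hx
      by_contra hnot
      have h1 : x ∉ s := fun h => hnot (hsS h)
      rw [hsfix _ h1] at hx
      exact hnot hx
  set dS : Perm {x : Fin k // x ∈ sS} := δp.subtypePerm (fun x => (hmem x).symm) with hdS
  set g5 : Perm (Fin 5) := (Equiv.permCongr f).symm dS with hg5
  have hFg5 : F g5 = δp := by
    rw [hFapp]
    refine Equiv.ext fun x => ?_
    by_cases hx : x ∈ sS
    · rw [Equiv.Perm.extendDomain_apply_subtype _ f hx]
      simp [hg5, Equiv.permCongr_apply, hdS]
    · rw [Equiv.Perm.extendDomain_apply_not_subtype _ f hx]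
      have : x ∉ s := fun h => hx (hsS h)
      exact (hsfix _ this).symm
  have hg5A : g5 ∈ alternatingGroup (Fin 5) := by
    rw [Equiv.Perm.mem_alternatingGroup]
    have := hFsign g5
    rw [hFg5] at this
    rw [← this]
    exact Equiv.Perm.mem_alternatingGroup.mp δ.2
  set d5 : alternatingGroup (Fin 5) := ⟨g5, hg5A⟩ with hd5
  have hF'd5 : F' d5 = δ := by
    apply Subtype.ext
    rw [hF'coe]
    exact hFg5
  set N5 : Subgroup (alternatingGroup (Fin 5)) := Q.comap F' with hN5
  have hN5norm : N5.Normal := hQ.comap F'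
  have hd5N5 : d5 ∈ N5 := by
    rw [hN5, Subgroup.mem_comap, hF'd5]; exact hδQ
  have hd5ne : d5 ≠ 1 := by
    intro h
    apply hδ1
    rw [← hF'd5, h, map_one]
  have hN5top : N5 = ⊤ := by
    rcases hN5norm.eq_bot_or_eq_top with h | h
    · exfalso; rw [h, Subgroup.mem_bot] at hd5N5; exact hd5ne hd5N5
    · exact h
  -- now get a three-cycle in Q
  set t5 : Perm (Fin 5) := Equiv.swap 0 1 * Equiv.swap 0 2 with ht5def
  have ht5 : IsThreeCycle t5 :=
    isThreeCycle_swap_mul_swap_same (by decide) (by decide) (by decide)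
  have ht : IsThreeCycle (F t5) := by
    rw [← card_support_eq_three_iff, hFapp, Equiv.Perm.support_extend_domain f, Finset.card_map]
    exact ht5.card_support
  have htQ : (⟨F t5, ht.mem_alternatingGroup⟩ : alternatingGroup (Fin k)) ∈ Q := by
    have h1 : (⟨t5, ht5.mem_alternatingGroup⟩ : alternatingGroup (Fin 5)) ∈ N5 := by
      rw [hN5top]; trivial
    rw [hN5, Subgroup.mem_comap] at h1
    have : F' ⟨t5, ht5.mem_alternatingGroup⟩ =
        ⟨F t5, ht.mem_alternatingGroup⟩ := Subtype.ext rfl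
    rwa [this] at h1
  have h5' : 5 ≤ Nat.card (Fin k) := by simpa using hk
  haveI := hQ
  rw [eq_top_iff, ← ht.alternating_normalClosure h5']
  exact Subgroup.normalClosure_le_normal (Set.singleton_subset_iff.mpr htQ)

open Equiv Equiv.Perm

lemma exists_notMem_finset {k : ℕ} (s : Finset (Fin k)) (h : s.card < k) : ∃ c, c ∉ s := by
  have h2 : 0 < sᶜ.card := by rw [Finset.card_compl, Fintype.card_fin]; omega
  obtain ⟨c, hc⟩ := Finset.card_pos.mp h2
  exact ⟨c, Finset.mem_compl.mp hc⟩

lemma centralizes_alt_eq_one {k : ℕ} (hk : 5 ≤ k) (σ : Perm (Fin k))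
    (h : ∀ a ∈ alternatingGroup (Fin k), σ * a = a * σ) : σ = 1 := by
  classical
  refine Equiv.ext fun x => ?_
  have key : ∀ y z : Fin k, x ≠ y → x ≠ z → y ≠ z → σ x ∈ ({x, y, z} : Finset (Fin k)) := by
    intro y z hxy hxz hyz
    set c : Perm (Fin k) := Equiv.swap x y * Equiv.swap y z with hc
    have hsupp : c.support = {x, y, z} :=
      support_swap_mul_swap (by simp [hxy, hxz, hyz])
    have hcA : c ∈ alternatingGroup (Fin k) := by
      rw [Equiv.Perm.mem_alternatingGroup, hc, map_mul,
        Equiv.Perm.sign_swap hxy, Equiv.Perm.sign_swap hyz]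
      simp
    have hconj : σ * c * σ⁻¹ = c := by
      rw [h c hcA, mul_inv_cancel_right]
    have hmap := Equiv.Perm.support_conj (σ := σ) (τ := c)
    rw [hconj, hsupp] at hmap
    have hmem : σ x ∈ ({x, y, z} : Finset (Fin k)).map σ.toEmbedding :=
      Finset.mem_map.mpr ⟨x, by simp, rfl⟩
    rwa [← hmap] at hmem
  obtain ⟨y, hy⟩ := exists_notMem_finset ({x} : Finset (Fin k)) (by simp; omega)
  obtain ⟨z, hz⟩ := exists_notMem_finset ({x, y} : Finset (Fin k))
    (lt_of_le_of_lt (Finset.card_insert_le _ _) (by simp; omega))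
  obtain ⟨u, hu⟩ := exists_notMem_finset ({x, y, z} : Finset (Fin k))
    (lt_of_le_of_lt ((Finset.card_insert_le _ _).trans
      (Nat.add_le_add_right (Finset.card_insert_le _ _) 1)) (by simp; omega))
  obtain ⟨v, hv⟩ := exists_notMem_finset ({x, y, z, u} : Finset (Fin k))
    (lt_of_le_of_lt ((Finset.card_insert_le _ _).trans
      (Nat.add_le_add_right ((Finset.card_insert_le _ _).trans
        (Nat.add_le_add_right (Finset.card_insert_le _ _) 1)) 1)) (by simp; omega))
  simp only [Finset.mem_insert, Finset.mem_singleton, not_or] at hy hz hu hv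
  have h1 := key y z (fun h => hy (h.symm)) (fun h => hz.1 h.symm) (fun h => hz.2 h.symm)
  have h2 := key u v (fun h => hu.1 h.symm) (fun h => hv.1 h.symm) (fun h => hv.2.2.2 h.symm)
  simp only [Finset.mem_insert, Finset.mem_singleton] at h1 h2
  show σ x = x
  rcases h1 with h1 | h1 | h1
  · exact h1
  · rcases h2 with h2 | h2 | h2
    · rw [h1] at h2; exact absurd h2.symm (fun h => hy h.symm)
    · rw [h1] at h2; exact absurd h2 (fun h => hu.2.1 h.symm)
    · rw [h1] at h2; exact absurd h2 (fun h => hv.2.1 h.symm)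
  · rcases h2 with h2 | h2 | h2
    · rw [h1] at h2; exact absurd h2.symm (fun h => hz.1 h.symm)
    · rw [h1] at h2; exact absurd h2 (fun h => hu.2.2 h.symm)
    · rw [h1] at h2; exact absurd h2 (fun h => hv.2.2.1 h.symm)

lemma mem_of_normalizes {ℓ k : ℕ} (hk : 5 ≤ k)
    (K : Subgroup (Fin ℓ → Equiv.Perm (Fin k)))
    (hKalt : ∀ g ∈ K, ∀ i, g i ∈ alternatingGroup (Fin k))
    (hKsub : ∀ i, ∀ σ ∈ alternatingGroup (Fin k), ∃ g ∈ K, g i = σ)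
    (S : Finset (Fin ℓ)) (ψ : Fin ℓ → Equiv.Perm (Fin k))
    (hψA : ∀ i, ψ i ∈ alternatingGroup (Fin k))
    (hψS : ∀ j ∉ S, ψ j = 1)
    (hn : ∀ g ∈ K, ψ⁻¹ * g * ψ ∈ K) : ψ ∈ K := by
  classical
  suffices H : ∀ (n : ℕ) (S : Finset (Fin ℓ)) (ψ : Fin ℓ → Equiv.Perm (Fin k)),
      S.card = n → (∀ i, ψ i ∈ alternatingGroup (Fin k)) → (∀ j ∉ S, ψ j = 1) →
      (∀ g ∈ K, ψ⁻¹ * g * ψ ∈ K) → ψ ∈ K by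
    exact H S.card S ψ rfl hψA hψS hn
  clear hψA hψS hn S ψ
  intro n
  induction n with
  | zero =>
    intro S ψ hcard hψA hψS _
    rw [Finset.card_eq_zero] at hcard
    subst hcard
    have : ψ = 1 := funext fun j => hψS j (by simp)
    rw [this]; exact one_mem K
  | succ n IH =>
    intro S ψ hcard hψA hψS hn
    have hSne : S.Nonempty := by
      rw [← Finset.card_pos, hcard]; omega
    obtain ⟨i, hi⟩ := hSne
    set P : Subgroup (Equiv.Perm (Fin k)) :=
      { carrier := {σ | ∃ g ∈ K, (∀ j ∉ S, g j = 1) ∧ g i = σ}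
        one_mem' := ⟨1, one_mem K, fun j _ => rfl, rfl⟩
        mul_mem' := by
          rintro σ₁ σ₂ ⟨g₁, hg₁, ht₁, rfl⟩ ⟨g₂, hg₂, ht₂, rfl⟩
          exact ⟨g₁ * g₂, mul_mem hg₁ hg₂, fun j hj => by
            simp [Pi.mul_apply, ht₁ j hj, ht₂ j hj], rfl⟩
        inv_mem' := by
          rintro σ ⟨g, hg, ht, rfl⟩
          exact ⟨g⁻¹, inv_mem hg, fun j hj => by simp [Pi.inv_apply, ht j hj], rfl⟩ } with hP
    have hPmem : ∀ σ, σ ∈ P ↔ ∃ g ∈ K, (∀ j ∉ S, g j = 1) ∧ g i = σ := fun σ => Iff.rfl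
    have hPle : ∀ σ ∈ P, σ ∈ alternatingGroup (Fin k) := by
      rintro σ ⟨g, hg, ht, rfl⟩
      exact hKalt g hg i
    have hPnorm : ∀ a ∈ alternatingGroup (Fin k), ∀ σ ∈ P, a * σ * a⁻¹ ∈ P := by
      rintro a ha σ ⟨g, hg, ht, rfl⟩
      obtain ⟨w, hw, hwi⟩ := hKsub i a ha
      refine ⟨w * g * w⁻¹, mul_mem (mul_mem hw hg) (inv_mem hw), fun j hj => by
        simp [Pi.mul_apply, Pi.inv_apply, ht j hj], by simp [Pi.mul_apply, Pi.inv_apply, hwi]⟩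
    set Q : Subgroup (alternatingGroup (Fin k)) := P.subgroupOf _ with hQ
    have hQnorm : Q.Normal := by
      constructor
      intro x hx g
      rw [hQ, Subgroup.mem_subgroupOf] at hx ⊢
      exact hPnorm _ g.2 _ hx
    have hcard' : (S.erase i).card = n := by
      rw [Finset.card_erase_of_mem hi, hcard]; rfl
    rcases alt_normal_bot_or_top hk Q hQnorm with hbot | htop
    · -- ψ i commutes with the alternating group, hence is 1
      have hψi : ψ i = 1 := by
        apply centralizes_alt_eq_one hk
        intro a ha
        obtain ⟨g, hg, hgi⟩ := hKsub i a ha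
        have hcK : ψ⁻¹ * g * ψ * g⁻¹ ∈ K := mul_mem (hn g hg) (inv_mem hg)
        have hct : ∀ j ∉ S, (ψ⁻¹ * g * ψ * g⁻¹) j = 1 := by
          intro j hj
          simp [Pi.mul_apply, Pi.inv_apply, hψS j hj]
        have hciP : (ψ⁻¹ * g * ψ * g⁻¹) i ∈ P := ⟨_, hcK, hct, rfl⟩
        have hciQ : (⟨(ψ⁻¹ * g * ψ * g⁻¹) i, hKalt _ hcK i⟩ : alternatingGroup (Fin k)) ∈ Q := by
          rw [hQ, Subgroup.mem_subgroupOf]; exact hciP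
        rw [hbot, Subgroup.mem_bot] at hciQ
        have hci1 : (ψ i)⁻¹ * g i * ψ i * (g i)⁻¹ = 1 := by
          have := congrArg (Subtype.val) hciQ
          simpa [Pi.mul_apply, Pi.inv_apply] using this
        have h3 : (ψ i)⁻¹ * g i * ψ i = g i := mul_inv_eq_one.mp hci1
        rw [hgi] at h3
        have h4 : a * ψ i = ψ i * a := by
          have := congrArg (fun x => ψ i * x) h3
          simpa [mul_assoc] using this
        exact h4.symm
      refine IH (S.erase i) ψ hcard' hψA ?_ hn
      intro j hj
      by_cases hji : j = i
      · subst hji; exact hψi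
      · exact hψS j (fun hjS => hj (Finset.mem_erase.mpr ⟨hji, hjS⟩))
    · -- ψ i lies in P; divide by a witness and recurse
      have hψiP : ψ i ∈ P := by
        have : (⟨ψ i, hψA i⟩ : alternatingGroup (Fin k)) ∈ Q := by
          rw [htop]; trivial
        rwa [hQ, Subgroup.mem_subgroupOf] at this
      obtain ⟨g, hg, ht, hgi⟩ := hψiP
      have hψ'K : ψ * g⁻¹ ∈ K := by
        refine IH (S.erase i) (ψ * g⁻¹) hcard' ?_ ?_ ?_
        · intro j
          exact mul_mem (hψA j) (inv_mem (hKalt g hg j))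
        · intro j hj
          by_cases hji : j = i
          · subst hji
            simp [Pi.mul_apply, Pi.inv_apply, hgi]
          · have hjS : j ∉ S := by
              intro hjS
              exact hj (Finset.mem_erase.mpr ⟨hji, hjS⟩)
            simp [Pi.mul_apply, Pi.inv_apply, hψS j hjS, ht j hjS]
        · intro h hh
          have heq : (ψ * g⁻¹)⁻¹ * h * (ψ * g⁻¹) = g * (ψ⁻¹ * h * ψ) * g⁻¹ := by group
          rw [heq]
          exact mul_mem (mul_mem hg (hn h hh)) (inv_mem hg)
      have : (ψ * g⁻¹) * g = ψ := by simp
      rw [← this]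
      exact mul_mem hψ'K hg

open Equiv Equiv.Perm



lemma blockEmbed_injective (ℓ k : ℕ) : Function.Injective (blockEmbed ℓ k) := by
  intro g g' h
  funext i
  refine Equiv.ext fun x => ?_
  have h1 := Equiv.ext_iff.mp (congrArg (fun (e : Equiv.Perm (Fin ℓ × Fin k)) => e) h) (i, x)
  exact congrArg Prod.snd h1

lemma exists_blockEmbed_eq {ℓ k : ℕ} (ψ : Equiv.Perm (Fin ℓ × Fin k))
    (h : ∀ p, (ψ p).1 = p.1) : ∃ τ, blockEmbed ℓ k τ = ψ := by
  have hinv : ∀ p : Fin ℓ × Fin k, (ψ⁻¹ p).1 = p.1 := by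
    intro p
    conv_rhs => rw [← show ψ (ψ⁻¹ p) = p from ψ.apply_symm_apply p]
    rw [h]
  refine ⟨fun i =>
    { toFun := fun x => (ψ (i, x)).2
      invFun := fun x => (ψ⁻¹ (i, x)).2
      left_inv := fun x => ?_
      right_inv := fun x => ?_ }, ?_⟩
  · show (ψ⁻¹ (i, (ψ (i, x)).2)).2 = x
    have h1 : ((i, (ψ (i, x)).2) : Fin ℓ × Fin k) = ψ (i, x) :=
      Prod.ext (h (i, x)).symm rfl
    rw [h1, show ψ⁻¹ (ψ (i, x)) = (i, x) from ψ.symm_apply_apply (i, x)]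
  · show (ψ (i, (ψ⁻¹ (i, x)).2)).2 = x
    have h1 : ((i, (ψ⁻¹ (i, x)).2) : Fin ℓ × Fin k) = ψ⁻¹ (i, x) :=
      Prod.ext (hinv (i, x)).symm rfl
    rw [h1, show ψ (ψ⁻¹ (i, x)) = (i, x) from ψ.apply_symm_apply (i, x)]
  · refine Equiv.ext fun p => ?_
    show (p.1, (ψ (p.1, p.2)).2) = ψ p
    exact Prod.ext (h p).symm rfl

end Aux

/-- Let `Ω = Δ` be partitioned into `ℓ` blocks of size `k ≥ 5`, `k ≠ 6`, let
`K, L ≤ ∏ᵢ Alt(k)` be subdirect products, and fix `π ∈ S_ℓ`.  Then the number of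
bijections `φ : Ω → Δ` mapping the `i`-th block to the `π(i)`-th block and conjugating `K`
onto `L` is at most `2^ℓ · |K|`. -/
theorem card_twisted_equivalences_le
    (ℓ k : ℕ) (hk5 : 5 ≤ k) (hk6 : k ≠ 6)
    (K L : Subgroup (Fin ℓ → Equiv.Perm (Fin k)))
    (hKalt : ∀ g ∈ K, ∀ i, g i ∈ alternatingGroup (Fin k))
    (hLalt : ∀ g ∈ L, ∀ i, g i ∈ alternatingGroup (Fin k))
    (hKsub : ∀ (i : Fin ℓ), ∀ σ ∈ alternatingGroup (Fin k), ∃ g ∈ K, g i = σ)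
    (hLsub : ∀ (i : Fin ℓ), ∀ σ ∈ alternatingGroup (Fin k), ∃ g ∈ L, g i = σ)
    (π : Equiv.Perm (Fin ℓ)) :
    Nat.card {φ : Equiv.Perm (Fin ℓ × Fin k) //
        (∀ p : Fin ℓ × Fin k, (φ p).1 = π p.1) ∧
        Subgroup.map (MulAut.conj φ⁻¹).toMonoidHom (Subgroup.map (blockEmbed ℓ k) K) =
          Subgroup.map (blockEmbed ℓ k) L} ≤
      2 ^ ℓ * Nat.card ↥K := by
  classical
  set ST := {φ : Equiv.Perm (Fin ℓ × Fin k) //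
      (∀ p : Fin ℓ × Fin k, (φ p).1 = π p.1) ∧
      Subgroup.map (MulAut.conj φ⁻¹).toMonoidHom (Subgroup.map (blockEmbed ℓ k) K) =
        Subgroup.map (blockEmbed ℓ k) L} with hSTdef
  rcases isEmpty_or_nonempty ST with he | hne
  · rw [Nat.card_of_isEmpty]
    exact Nat.zero_le _
  obtain ⟨⟨φ₀, hb₀, hc₀⟩⟩ := hne
  set KE := Subgroup.map (blockEmbed ℓ k) K with hKE
  set LE := Subgroup.map (blockEmbed ℓ k) L with hLE
  -- membership characterization from the conjugation condition
  have hL : ∀ (φ : Equiv.Perm (Fin ℓ × Fin k)),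
      Subgroup.map (MulAut.conj φ⁻¹).toMonoidHom KE = LE →
      ∀ y, y ∈ LE ↔ φ * y * φ⁻¹ ∈ KE := by
    intro φ hc y
    rw [← hc]
    constructor
    · intro hy
      obtain ⟨x, hx, hfx⟩ := Subgroup.mem_map.mp hy
      have : φ * y * φ⁻¹ = x := by
        rw [← hfx]
        simp only [MulEquiv.coe_toMonoidHom, MulAut.conj_apply, inv_inv]
        group
      rwa [this]
    · intro hy
      refine Subgroup.mem_map.mpr ⟨φ * y * φ⁻¹, hy, ?_⟩
      simp only [MulEquiv.coe_toMonoidHom, MulAut.conj_apply, inv_inv]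
      group
  -- the twisted difference of any two elements of ST conjugates KE to itself
  have hiff : ∀ (φ : ST) (z : Equiv.Perm (Fin ℓ × Fin k)),
      z ∈ KE ↔ (φ.1 * φ₀⁻¹) * z * (φ.1 * φ₀⁻¹)⁻¹ ∈ KE := by
    intro φ z
    have h0 := hL φ₀ hc₀ (φ₀⁻¹ * z * φ₀)
    have h1 := hL φ.1 φ.2.2 (φ₀⁻¹ * z * φ₀)
    have e0 : φ₀ * (φ₀⁻¹ * z * φ₀) * φ₀⁻¹ = z := by group
    have e1 : φ.1 * (φ₀⁻¹ * z * φ₀) * φ.1⁻¹ = (φ.1 * φ₀⁻¹) * z * (φ.1 * φ₀⁻¹)⁻¹ := by group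
    rw [e0] at h0
    rw [e1] at h1
    exact h0.symm.trans h1
  -- block-preservation of the twisted difference
  have hbp : ∀ (φ : ST) (p : Fin ℓ × Fin k), ((φ.1 * φ₀⁻¹) p).1 = p.1 := by
    intro φ p
    have h2 := hb₀ (φ₀⁻¹ p)
    rw [show φ₀ (φ₀⁻¹ p) = p from φ₀.apply_symm_apply p] at h2
    have h3 := φ.2.1 (φ₀⁻¹ p)
    show (φ.1 (φ₀⁻¹ p)).1 = p.1
    rw [h3, ← h2]
  obtain ⟨T, hT⟩ : ∃ T : ST → (Fin ℓ → Equiv.Perm (Fin k)),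
      ∀ φ, blockEmbed ℓ k (T φ) = φ.1 * φ₀⁻¹ :=
    ⟨fun φ => Classical.choose (exists_blockEmbed_eq _ (hbp φ)),
     fun φ => Classical.choose_spec (exists_blockEmbed_eq _ (hbp φ))⟩
  -- conjugation by T φ preserves K, in both directions
  have dirA : ∀ (φ : ST), ∀ g ∈ K, (T φ)⁻¹ * g * T φ ∈ K := by
    intro φ g hg
    have hz : blockEmbed ℓ k ((T φ)⁻¹ * g * T φ) ∈ KE := by
      apply (hiff φ _).mpr
      have heq : (φ.1 * φ₀⁻¹) * blockEmbed ℓ k ((T φ)⁻¹ * g * T φ) * (φ.1 * φ₀⁻¹)⁻¹ =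
          blockEmbed ℓ k g := by
        rw [← hT φ, map_mul, map_mul, map_inv]
        group
      rw [heq]
      exact Subgroup.mem_map_of_mem _ hg
    obtain ⟨g', hg', hEg'⟩ := Subgroup.mem_map.mp hz
    have := blockEmbed_injective ℓ k hEg'
    rwa [← this]
  have dirB : ∀ (φ : ST), ∀ g ∈ K, T φ * g * (T φ)⁻¹ ∈ K := by
    intro φ g hg
    have hz : (φ.1 * φ₀⁻¹) * blockEmbed ℓ k g * (φ.1 * φ₀⁻¹)⁻¹ ∈ KE :=
      (hiff φ _).mp (Subgroup.mem_map_of_mem _ hg)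
    have heq : (φ.1 * φ₀⁻¹) * blockEmbed ℓ k g * (φ.1 * φ₀⁻¹)⁻¹ =
        blockEmbed ℓ k (T φ * g * (T φ)⁻¹) := by
      rw [← hT φ, map_mul, map_mul, map_inv]
    rw [heq] at hz
    obtain ⟨g', hg', hEg'⟩ := Subgroup.mem_map.mp hz
    have := blockEmbed_injective ℓ k hEg'
    rwa [← this]
  -- the sign vector
  set e : ST → (Fin ℓ → Bool) := fun φ i => decide (Equiv.Perm.sign (T φ i) = 1) with he
  have key : ∀ φ₁ φ₂ : ST, e φ₁ = e φ₂ → T φ₁ * (T φ₂)⁻¹ ∈ K := by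
    intro φ₁ φ₂ heq
    refine mem_of_normalizes hk5 K hKalt hKsub Finset.univ _ ?_ ?_ ?_
    · intro i
      have h1 : (decide (Equiv.Perm.sign (T φ₁ i) = 1) : Bool) =
          decide (Equiv.Perm.sign (T φ₂ i) = 1) := by
        have := congrFun heq i
        simpa [he] using this
      rw [Equiv.Perm.mem_alternatingGroup]
      simp only [Pi.mul_apply, Pi.inv_apply, map_mul, map_inv]
      rcases Int.units_eq_one_or (Equiv.Perm.sign (T φ₁ i)) with h | h <;>
        rcases Int.units_eq_one_or (Equiv.Perm.sign (T φ₂ i)) with h' | h'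
      · rw [h, h']; simp
      · exfalso; rw [h, h'] at h1; simp at h1
      · exfalso; rw [h, h'] at h1; simp at h1
      · rw [h, h']; simp
    · intro j hj
      exact absurd (Finset.mem_univ j) hj
    · intro g hg
      have heq2 : (T φ₁ * (T φ₂)⁻¹)⁻¹ * g * (T φ₁ * (T φ₂)⁻¹) =
          T φ₂ * ((T φ₁)⁻¹ * g * T φ₁) * (T φ₂)⁻¹ := by group
      rw [heq2]
      exact dirB φ₂ _ (dirA φ₁ g hg)
  -- the representative function
  obtain ⟨rep, hrep⟩ : ∃ rep : (Fin ℓ → Bool) → (Fin ℓ → Equiv.Perm (Fin k)),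
      ∀ φ : ST, ∃ φ₁ : ST, e φ₁ = e φ ∧ rep (e φ) = T φ₁ := by
    refine ⟨fun ε => if h : ∃ φ' : ST, e φ' = ε then T (Classical.choose h) else 1,
      fun φ => ?_⟩
    have h : ∃ φ' : ST, e φ' = e φ := ⟨φ, rfl⟩
    exact ⟨Classical.choose h, Classical.choose_spec h, dif_pos h⟩
  have hKmem : ∀ φ : ST, T φ * (rep (e φ))⁻¹ ∈ K := by
    intro φ
    obtain ⟨φ₁, hφ₁, hrepeq⟩ := hrep φ
    rw [hrepeq]
    exact key φ φ₁ hφ₁.symm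
  -- the injection
  have hinj : Function.Injective
      (fun φ : ST => ((e φ, ⟨T φ * (rep (e φ))⁻¹, hKmem φ⟩) : (Fin ℓ → Bool) × ↥K)) := by
    intro φ φ' hFeq
    have h1 : e φ = e φ' := congrArg Prod.fst hFeq
    have h2 : T φ * (rep (e φ))⁻¹ = T φ' * (rep (e φ'))⁻¹ :=
      congrArg (fun x => (x.2 : Fin ℓ → Equiv.Perm (Fin k))) hFeq
    rw [h1] at h2
    have h3 : T φ = T φ' := mul_right_cancel h2
    have h4 : φ.1 * φ₀⁻¹ = φ'.1 * φ₀⁻¹ := by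
      rw [← hT φ, ← hT φ', h3]
    exact Subtype.ext (mul_right_cancel h4)
  calc Nat.card ST ≤ Nat.card ((Fin ℓ → Bool) × ↥K) :=
        Nat.card_le_card_of_injective _ hinj
    _ = 2 ^ ℓ * Nat.card ↥K := by
        rw [Nat.card_prod]
        congr 1
        simp [Nat.card_pi, Nat.card_eq_fintype_card]
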